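/- Let $p>1$, $w<0$, $Z\in\mathbb{R}$ with $Z^2/4<-w$, $a>0$, $b\in\mathbb{R}$, $\alpha=a/(p+1)$, $\beta=b/p$, $\alpha^2-\beta w>0$. Let $\phi$ solve $\phi''+w\phi+a\phi^p+b\phi^{2p-1}=0$ on $\mathbb{R}$ with $\phi>0$ decaying at infinity (the explicit cosh profile), and let $s=R^{-1}(-Z/(2\sqrt{-w}))$ where $R$ is the diffeomorphism $R(s)=\frac{\sqrt{\alpha^2-\beta w}\sinh((p-1)\sqrt{-w}\,s)}{\alpha+\sqrt{\alpha^2-\beta w}\cosh((p-1)\sqrt{-w}\,s)}$ from $\mathbb{R}$ onto $(-1,1)$. Then the even function $\phi_s(x)=\phi(|x|-s)$ satisfies the jump condition $\phi_s'(0^+)-\phi_s'(0^-)=-Z\phi_s(0)$. -/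

import Mathlib

open Real Filter Set

theorem stmt_8 (p w a b Z : ℝ) (hp : 1 < p) (hw : w < 0) (ha : 0 < a)
    (hZ : Z ^ 2 / 4 < -w)
    (α β : ℝ) (hαdef : α = a / (p + 1)) (hβdef : β = b / p)
    (hD : 0 < α ^ 2 - β * w)
    (φ R : ℝ → ℝ)
    (hφ : φ = fun x : ℝ =>
      ((-w) / (α + Real.sqrt (α ^ 2 - β * w) *
        Real.cosh ((p - 1) * Real.sqrt (-w) * x))) ^ (1 / (p - 1)))
    (hR : R = fun s : ℝ =>
      Real.sqrt (α ^ 2 - β * w) * Real.sinh ((p - 1) * Real.sqrt (-w) * s) /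
        (α + Real.sqrt (α ^ 2 - β * w) * Real.cosh ((p - 1) * Real.sqrt (-w) * s)))
    (s : ℝ) (hs : R s = -Z / (2 * Real.sqrt (-w)))
    (φs : ℝ → ℝ) (hφs : φs = fun x : ℝ => φ (|x| - s)) :
    ∃ Lp Lm : ℝ,
      Tendsto (deriv φs) (nhdsWithin 0 (Set.Ioi 0)) (nhds Lp) ∧
      Tendsto (deriv φs) (nhdsWithin 0 (Set.Iio 0)) (nhds Lm) ∧
      Lp - Lm = -Z * φs 0 := by
  have hw' : (0:ℝ) < -w := by linarith
  set t := Real.sqrt (-w) with htdef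
  have ht0 : 0 < t := Real.sqrt_pos.mpr hw'
  have ht2 : t ^ 2 = -w := Real.sq_sqrt hw'.le
  set D := Real.sqrt (α ^ 2 - β * w) with hDdef
  have hD0 : 0 < D := Real.sqrt_pos.mpr hD
  have hp1 : 0 < p - 1 := by linarith
  have hα : 0 < α := by rw [hαdef]; positivity
  set c := (p - 1) * t with hcdef
  have hc0 : 0 < c := mul_pos hp1 ht0
  set g : ℝ → ℝ := fun x => α + D * Real.cosh (c * x) with hgdef
  have hg0 : ∀ x, 0 < g x := by
    intro x
    have h1 := Real.one_le_cosh (c * x)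
    have : D * 1 ≤ D * Real.cosh (c * x) := by nlinarith
    simp only [hgdef]
    nlinarith
  set f : ℝ → ℝ := fun x => -w / g x with hfdef
  have hf0 : ∀ x, 0 < f x := fun x => div_pos hw' (hg0 x)
  set r := 1 / (p - 1) with hrdef
  have hr0 : 0 < r := by positivity
  have hφf : φ = fun x => f x ^ r := by rw [hφ]
  set Φd : ℝ → ℝ := fun x => -t * (D * Real.sinh (c * x) / g x) * φ x with hΦd
  -- derivative of φ
  have hder : ∀ x, HasDerivAt φ (Φd x) x := by
    intro x
    have hgx : HasDerivAt g (D * (Real.sinh (c * x) * c)) x := by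
      have h1 : HasDerivAt (fun y : ℝ => c * y) c x := by
        simpa using (hasDerivAt_id x).const_mul c
      exact ((h1.cosh).const_mul D).const_add α
    have hfx : HasDerivAt f (-w * (-(D * (Real.sinh (c * x) * c)) / g x ^ 2)) x := by
      have := (hgx.inv (hg0 x).ne').const_mul (-w)
      simpa [hfdef, div_eq_mul_inv] using this
    have hrp := hfx.rpow_const (p := r) (Or.inl (hf0 x).ne')
    rw [hφf]
    convert hrp using 1
    -- algebra
    have hfval : f x = t ^ 2 / g x := by simp [hfdef, ht2]
    have hpow : f x ^ (r - 1) = f x ^ r / f x := by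
      rw [Real.rpow_sub (hf0 x), Real.rpow_one]
    have hGne : g x ≠ 0 := (hg0 x).ne'
    have htne : t ≠ 0 := ht0.ne'
    have hwt : w = -t ^ 2 := by linarith
    have hc' : c = t / r := by
      rw [hrdef, hcdef]; field_simp
    simp only [hΦd, hφf]
    rw [hpow, hfval, hwt, hc']
    generalize (t ^ 2 / g x) ^ r = P
    field_simp
  -- continuity
  have hgc : Continuous g := by
    rw [hgdef]; fun_prop
  have hfc : Continuous f := by
    rw [hfdef]
    exact continuous_const.div hgc fun x => (hg0 x).ne'
  have hφc : Continuous φ := by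
    rw [hφf]
    exact hfc.rpow_const fun x => Or.inr hr0.le
  have hΦc : Continuous Φd := by
    rw [hΦd]
    exact ((continuous_const.mul ((continuous_const.mul
      (Real.continuous_sinh.comp (continuous_const.mul continuous_id))).div hgc
      fun x => (hg0 x).ne')).mul hφc)
  -- one-sided formulas for deriv φs
  have keyP : ∀ x ∈ Set.Ioi (0:ℝ), deriv φs x = Φd (x - s) := by
    intro x hx
    have hev : φs =ᶠ[nhds x] fun y => φ (y - s) := by
      filter_upwards [Ioi_mem_nhds hx] with y hy
      simp [hφs, abs_of_pos (Set.mem_Ioi.mp hy)]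
    rw [hev.deriv_eq]
    have h1 : HasDerivAt (fun y : ℝ => φ (y - s)) (Φd (x - s) * 1) x :=
      (hder (x - s)).comp x ((hasDerivAt_id x).sub_const s)
    simpa using h1.deriv
  have keyM : ∀ x ∈ Set.Iio (0:ℝ), deriv φs x = -Φd (-x - s) := by
    intro x hx
    have hev : φs =ᶠ[nhds x] fun y => φ (-y - s) := by
      filter_upwards [Iio_mem_nhds hx] with y hy
      simp [hφs, abs_of_neg (Set.mem_Iio.mp hy)]
    rw [hev.deriv_eq]
    have h0 : HasDerivAt (fun y : ℝ => -y - s) (-1) x := by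
      simpa using ((hasDerivAt_id x).neg.sub_const s)
    have h1 : HasDerivAt (fun y : ℝ => φ (-y - s)) (Φd (-x - s) * (-1)) x :=
      (hder (-x - s)).comp x h0
    rw [h1.deriv]; ring
  refine ⟨Φd (-s), -Φd (-s), ?_, ?_, ?_⟩
  · have h2 : Tendsto (fun x : ℝ => Φd (x - s)) (nhdsWithin 0 (Set.Ioi 0)) (nhds (Φd (-s))) := by
      have hcont : Continuous (fun x : ℝ => Φd (x - s)) :=
        hΦc.comp (continuous_id.sub continuous_const)
      have := (hcont.tendsto 0).mono_left (nhdsWithin_le_nhds (s := Set.Ioi (0:ℝ)))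
      simpa using this
    refine h2.congr' ?_
    filter_upwards [self_mem_nhdsWithin] with x hx
    exact (keyP x hx).symm
  · have h2 : Tendsto (fun x : ℝ => -Φd (-x - s)) (nhdsWithin 0 (Set.Iio 0)) (nhds (-Φd (-s))) := by
      have hcont : Continuous (fun x : ℝ => -Φd (-x - s)) :=
        (hΦc.comp (continuous_id.neg.sub continuous_const)).neg
      have := (hcont.tendsto 0).mono_left (nhdsWithin_le_nhds (s := Set.Iio (0:ℝ)))
      simpa using this
    refine h2.congr' ?_
    filter_upwards [self_mem_nhdsWithin] with x hx
    exact (keyM x hx).symm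
  · -- jump condition
    have htne : t ≠ 0 := ht0.ne'
    have hgs : g (-s) = g s := by simp [hgdef, mul_comm, Real.cosh_neg, mul_neg]
    have hRs : D * Real.sinh (c * s) / g s = -Z / (2 * t) := by
      rw [hR] at hs; exact hs
    have hΦval : Φd (-s) = -Z / 2 * φ (-s) := by
      rw [hΦd]
      simp only [mul_neg, Real.sinh_neg, hgs]
      rw [show -(D * Real.sinh (c * s)) / g s = -(D * Real.sinh (c * s) / g s) by ring, hRs]
      field_simp
    have hφs0 : φs 0 = φ (-s) := by simp [hφs]
    rw [hφs0, hΦval]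
    ring
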